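/- Let ε₀ > 0 be sufficiently small, let h be a polynomial satisfying the coefficient smallness condition, and let K_L be a large number. Then the total number of bad lines is at most 10^{10d} · c₁(K_L^{-1})^{-1}, where c₁(K_L^{-1}) = 10^{-10d} ε₀ K_L^{-1}. -/

import Mathlib

open MeasureTheory

noncomputable section

/-- The square `[-1,1]²`. -/
def unitSq : Set (ℝ × ℝ) := Set.Icc (-1 : ℝ) 1 ×ˢ Set.Icc (-1 : ℝ) 1

/-- The polynomial `h(ξ,η) = ξη + a₂₀ξ² + a₂₂η² + Σ_{i=3}^d Σ_{j=0}^i a_{i,j} ξ^{i-j} η^j`. -/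
def hpoly (d : ℕ) (a : ℕ → ℕ → ℝ) (ξ η : ℝ) : ℝ :=
  ξ * η + a 2 0 * ξ ^ 2 + a 2 2 * η ^ 2 +
    ∑ i ∈ Finset.Icc 3 d, ∑ j ∈ Finset.range (i + 1), a i j * ξ ^ (i - j) * η ^ j

/-- Coefficient smallness condition
`|a₂₀| + |a₂₂| + 100^d Σ_{i=3}^d Σ_{j=0}^i |a_{i,j}| ≤ ε₀`. -/
def CoeffSmall (d : ℕ) (ε₀ : ℝ) (a : ℕ → ℕ → ℝ) : Prop :=
  |a 2 0| + |a 2 2| +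
      100 ^ d * ∑ i ∈ Finset.Icc 3 d, ∑ j ∈ Finset.range (i + 1), |a i j| ≤ ε₀

/-- `c₁(K_L⁻¹) = 10^{-10d} ε₀ K_L^{-1}`. -/
def c1 (d : ℕ) (ε₀ KL : ℝ) : ℝ := ε₀ / (10 ^ (10 * d) * KL)

/-- Euclidean distance in the plane. -/
def eudist (p q : ℝ × ℝ) : ℝ := Real.sqrt ((p.1 - q.1) ^ 2 + (p.2 - q.2) ^ 2)

/-- `D` is a maximal `c`-separated subset of the unit circle. -/
def MaxSepSet (c : ℝ) (D : Set (ℝ × ℝ)) : Prop :=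
  (∀ v ∈ D, v.1 ^ 2 + v.2 ^ 2 = 1) ∧
  (∀ v ∈ D, ∀ w ∈ D, v ≠ w → c ≤ eudist v w) ∧
  (∀ w : ℝ × ℝ, w.1 ^ 2 + w.2 ^ 2 = 1 → w ∉ D → ∃ v ∈ D, eudist w v < c)

/-- The line `l_{1,a,v}` through `(0,a)` with direction `v` (when `|v₂| ≤ |v₁|`),
resp. `l_{2,a,v}` through `(a,0)` with direction `v` (when `|v₂| > |v₁|`). -/
def lineSet (a : ℝ) (v : ℝ × ℝ) : Set (ℝ × ℝ) :=
  if |v.2| ≤ |v.1| then {p | ∃ t : ℝ, p = (t * v.1, a + t * v.2)}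
  else {p | ∃ t : ℝ, p = (a + t * v.1, t * v.2)}

/-- The strip of (Euclidean) width `c` around the line `l_{ι,a,v}`. -/
def stripSet (c : ℝ) (a : ℝ) (v : ℝ × ℝ) : Set (ℝ × ℝ) :=
  {p | ∃ q ∈ lineSet a v, eudist p q ≤ c}

/-- `M_l⁻¹`, the inverse of the affine map `M_l` which first translates the base point
of the line `l_{ι,a,v}` to the origin and then rotates `v` to `(1,0)`. -/
def Minv (a : ℝ) (v : ℝ × ℝ) (p : ℝ × ℝ) : ℝ × ℝ :=
  if |v.2| ≤ |v.1| then (v.1 * p.1 - v.2 * p.2, v.2 * p.1 + v.1 * p.2 + a)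
  else (v.1 * p.1 - v.2 * p.2 + a, v.2 * p.1 + v.1 * p.2)

/-- The line `l_{ι,a,v}` is a bad line for `h`: writing
`(h ∘ M_l⁻¹)(ξ,η) = Σ c_{i,j} ξ^{i-j} η^j`, one has
`max_{2 ≤ i ≤ d} |c_{i,0}| ≤ 10^{-5d} ε₀ K_L^{-1}` (resp. `c_{i,i}` when `|v₂| > |v₁|`). -/
def IsBadLine (d : ℕ) (h : ℝ → ℝ → ℝ) (ε₀ KL : ℝ) (a : ℝ) (v : ℝ × ℝ) : Prop :=
  ∃ c : ℕ → ℕ → ℝ,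
    (∀ ξ η : ℝ, h (Minv a v (ξ, η)).1 (Minv a v (ξ, η)).2 =
      ∑ i ∈ Finset.range (d + 1), ∑ j ∈ Finset.range (i + 1),
        c i j * ξ ^ (i - j) * η ^ j) ∧
    ((|v.2| ≤ |v.1| → ∀ i ∈ Finset.Icc 2 d, |c i 0| ≤ ε₀ / (10 ^ (5 * d) * KL)) ∧
     (¬ |v.2| ≤ |v.1| → ∀ i ∈ Finset.Icc 2 d, |c i i| ≤ ε₀ / (10 ^ (5 * d) * KL)))

/-- `(a, v)` is an admissible parameter (`a ∈ c₁ℤ ∩ [-10,10]`, `v ∈ 𝔻`) giving a bad line. -/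
def IsBadParam (d : ℕ) (h : ℝ → ℝ → ℝ) (ε₀ KL : ℝ) (D : Set (ℝ × ℝ))
    (a : ℝ) (v : ℝ × ℝ) : Prop :=
  (∃ m : ℤ, a = (m : ℝ) * c1 d ε₀ KL) ∧ |a| ≤ 10 ∧ v ∈ D ∧ IsBadLine d h ε₀ KL a v

/-- `L` is a bad strip: the `c₁`-neighborhood of a bad line. -/
def IsBadStrip (d : ℕ) (h : ℝ → ℝ → ℝ) (ε₀ KL : ℝ) (D : Set (ℝ × ℝ))
    (L : Set (ℝ × ℝ)) : Prop :=
  ∃ a v, IsBadParam d h ε₀ KL D a v ∧ L = stripSet (c1 d ε₀ KL) a v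

namespace Stmt2

lemma pow_lip (M : ℝ) (hM : 0 ≤ M) :
    ∀ (n : ℕ) (x y : ℝ), |x| ≤ M → |y| ≤ M → |x ^ n - y ^ n| ≤ n * M ^ (n - 1) * |x - y| := by
  intro n
  induction n with
  | zero => intro x y _ _; simp
  | succ n ih =>
    intro x y hx hy
    have h1 : x ^ (n+1) - y ^ (n+1) = x ^ n * (x - y) + (x ^ n - y ^ n) * y := by ring
    have h2 : |x ^ n * (x - y)| ≤ M ^ n * |x - y| := by
      rw [abs_mul, abs_pow]
      gcongr
    have h3 : |(x ^ n - y ^ n) * y| ≤ (n * M ^ (n - 1) * |x - y|) * M := by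
      rw [abs_mul]
      exact mul_le_mul (ih x y hx hy) hy (abs_nonneg _) (by positivity)
    have h4 : |x ^ (n+1) - y ^ (n+1)| ≤ M ^ n * |x - y| + (n * M ^ (n - 1) * |x - y|) * M := by
      calc |x ^ (n+1) - y ^ (n+1)| = |x ^ n * (x - y) + (x ^ n - y ^ n) * y| := by rw [h1]
        _ ≤ |x ^ n * (x - y)| + |(x ^ n - y ^ n) * y| := abs_add_le _ _
        _ ≤ _ := add_le_add h2 h3
    refine h4.trans ?_
    rcases n with _ | m
    · simp
    · norm_num at h4 ⊢
      have h5 : ((m:ℝ)+1) * M ^ m * |x - y| * M = ((m:ℝ)+1) * M ^ (m+1) * |x-y| := by ring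
      push_cast
      nlinarith [abs_nonneg (x - y), pow_nonneg hM (m+1), h5]

lemma prod_lip (d m j : ℕ) (hmj : m + j ≤ d) (x y x' y' : ℝ)
    (hx : |x| ≤ 11) (hy : |y| ≤ 11) (hx' : |x'| ≤ 11) (hy' : |y'| ≤ 11) :
    |x ^ m * y ^ j - x' ^ m * y' ^ j| ≤ (d * 11 ^ d) * (|x - x'| + |y - y'|) := by
  have e : x ^ m * y ^ j - x' ^ m * y' ^ j = (x ^ m - x' ^ m) * y ^ j + x' ^ m * (y ^ j - y' ^ j) := by
    ring
  have h1 : |(x ^ m - x' ^ m) * y ^ j| ≤ (d * 11 ^ d) * |x - x'| := by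
    rw [abs_mul]
    have hp := pow_lip 11 (by norm_num) m x x' hx hx'
    have hyj : |y ^ j| ≤ 11 ^ j := by rw [abs_pow]; exact pow_le_pow_left₀ (abs_nonneg _) hy j
    have key : (m : ℝ) * 11 ^ (m - 1) * 11 ^ j ≤ d * 11 ^ d := by
      rcases Nat.eq_zero_or_pos m with hm | hm
      · subst hm
        have : (0:ℝ) ≤ d * 11 ^ d := by positivity
        simpa using this
      · have h11 : (11:ℝ) ^ (m - 1) * 11 ^ j = 11 ^ (m - 1 + j) := by rw [pow_add]
        have hle : m - 1 + j ≤ d := by omega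
        have : (11:ℝ) ^ (m - 1 + j) ≤ 11 ^ d := pow_le_pow_right₀ (by norm_num) hle
        have hmd : (m : ℝ) ≤ d := by exact_mod_cast (by omega : m ≤ d)
        calc (m : ℝ) * 11 ^ (m - 1) * 11 ^ j = m * (11 ^ (m-1) * 11 ^ j) := by ring
          _ = m * 11 ^ (m - 1 + j) := by rw [h11]
          _ ≤ d * 11 ^ d := by
              apply mul_le_mul hmd this (by positivity) (by positivity)
    calc |x ^ m - x' ^ m| * |y ^ j| ≤ (m * 11 ^ (m - 1) * |x - x'|) * 11 ^ j :=
          mul_le_mul hp hyj (abs_nonneg _) (by positivity)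
      _ = (m * 11 ^ (m-1) * 11 ^ j) * |x - x'| := by ring
      _ ≤ (d * 11 ^ d) * |x - x'| := by
          apply mul_le_mul_of_nonneg_right key (abs_nonneg _)
  have h2 : |x' ^ m * (y ^ j - y' ^ j)| ≤ (d * 11 ^ d) * |y - y'| := by
    rw [abs_mul]
    have hp := pow_lip 11 (by norm_num) j y y' hy hy'
    have hxm : |x' ^ m| ≤ 11 ^ m := by rw [abs_pow]; exact pow_le_pow_left₀ (abs_nonneg _) hx' m
    have key : (11:ℝ) ^ m * ((j:ℝ) * 11 ^ (j - 1)) ≤ d * 11 ^ d := by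
      rcases Nat.eq_zero_or_pos j with hj | hj
      · subst hj
        have : (0:ℝ) ≤ d * 11 ^ d := by positivity
        simpa using this
      · have h11 : (11:ℝ) ^ m * 11 ^ (j - 1) = 11 ^ (m + (j - 1)) := by rw [pow_add]
        have hle : m + (j - 1) ≤ d := by omega
        have hpow : (11:ℝ) ^ (m + (j-1)) ≤ 11 ^ d := pow_le_pow_right₀ (by norm_num) hle
        have hjd : (j : ℝ) ≤ d := by exact_mod_cast (by omega : j ≤ d)
        calc (11:ℝ) ^ m * ((j:ℝ) * 11 ^ (j - 1)) = j * (11 ^ m * 11 ^ (j-1)) := by ring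
          _ = j * 11 ^ (m + (j - 1)) := by rw [h11]
          _ ≤ d * 11 ^ d := mul_le_mul hjd hpow (by positivity) (by positivity)
    calc |x' ^ m| * |y ^ j - y' ^ j| ≤ 11 ^ m * ((j * 11 ^ (j - 1)) * |y - y'|) :=
          mul_le_mul hxm hp (abs_nonneg _) (by positivity)
      _ = (11 ^ m * (j * 11 ^ (j-1))) * |y - y'| := by ring
      _ ≤ (d * 11 ^ d) * |y - y'| := mul_le_mul_of_nonneg_right key (abs_nonneg _)
  calc |x ^ m * y ^ j - x' ^ m * y' ^ j| ≤ |(x ^ m - x' ^ m) * y ^ j| + |x' ^ m * (y ^ j - y' ^ j)| := by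
        rw [e]; exact abs_add_le _ _
    _ ≤ (d * 11 ^ d) * |x - x'| + (d * 11 ^ d) * |y - y'| := add_le_add h1 h2
    _ = (d * 11 ^ d) * (|x - x'| + |y - y'|) := by ring

lemma num1 (d : ℕ) (hd : 3 ≤ d) : 100 * (d:ℝ) * 11 ^ d ≤ 100 ^ d := by
  induction d with
  | zero => omega
  | succ n ih =>
    rcases Nat.lt_or_ge n 3 with h3 | h3
    · interval_cases n
      · omega
      · omega
      · norm_num
    · have hn := ih h3
      have h1 : (100:ℝ) * (↑(n+1)) * 11 ^ (n+1) ≤ 22 * (100 * n * 11 ^ n) := by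
        push_cast
        have hn3 : (3:ℝ) ≤ n := by exact_mod_cast h3
        have hp : (0:ℝ) < 11 ^ n := by positivity
        have hh : (11:ℝ)*((n:ℝ)+1) ≤ 22*(n:ℝ) := by nlinarith
        rw [pow_succ]
        nlinarith [mul_le_mul_of_nonneg_left hh (show (0:ℝ) ≤ 100*11^n by positivity)]
      have h2 : (22:ℝ) * (100 * n * 11 ^ n) ≤ 22 * 100 ^ n := by
        nlinarith [hn]
      have h3' : (22:ℝ) * 100 ^ n ≤ 100 ^ (n+1) := by
        have : (0:ℝ) < 100 ^ n := by positivity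
        rw [pow_succ]
        nlinarith
      linarith

lemma num2 (d : ℕ) : ((d:ℝ) + 1) ≤ 10 ^ d := by
  induction d with
  | zero => norm_num
  | succ n ih =>
    have : (0:ℝ) < 10 ^ n := by positivity
    push_cast
    push_cast at ih
    rw [pow_succ]
    nlinarith

end Stmt2
namespace Stmt2

/-- The higher-order part of `hpoly`. -/
def dblSum (d : ℕ) (a : ℕ → ℕ → ℝ) (x y : ℝ) : ℝ :=
  ∑ i ∈ Finset.Icc 3 d, ∑ j ∈ Finset.range (i + 1), a i j * x ^ (i - j) * y ^ j

/-- Sum of absolute values of higher coefficients. -/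
def Sabs (d : ℕ) (a : ℕ → ℕ → ℝ) : ℝ :=
  ∑ i ∈ Finset.Icc 3 d, ∑ j ∈ Finset.range (i + 1), |a i j|

lemma hpoly_split (d : ℕ) (a : ℕ → ℕ → ℝ) (x y : ℝ) :
    hpoly d a x y = x * y + a 2 0 * x ^ 2 + a 2 2 * y ^ 2 + dblSum d a x y := rfl

lemma Sabs_nonneg (d : ℕ) (a : ℕ → ℕ → ℝ) : 0 ≤ Sabs d a := by
  apply Finset.sum_nonneg
  intro i _
  exact Finset.sum_nonneg fun j _ => abs_nonneg _

lemma dbl_bound (d : ℕ) (a : ℕ → ℕ → ℝ) (f : ℕ → ℕ → ℝ) (C : ℝ)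
    (h : ∀ i ∈ Finset.Icc 3 d, ∀ j ∈ Finset.range (i + 1), |f i j| ≤ |a i j| * C) :
    |∑ i ∈ Finset.Icc 3 d, ∑ j ∈ Finset.range (i + 1), f i j| ≤ Sabs d a * C := by
  have h1 : |∑ i ∈ Finset.Icc 3 d, ∑ j ∈ Finset.range (i + 1), f i j| ≤
      ∑ i ∈ Finset.Icc 3 d, ∑ j ∈ Finset.range (i + 1), |f i j| := by
    refine (Finset.abs_sum_le_sum_abs _ _).trans ?_
    exact Finset.sum_le_sum fun i _ => Finset.abs_sum_le_sum_abs _ _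
  refine h1.trans ?_
  have h2 : ∑ i ∈ Finset.Icc 3 d, ∑ j ∈ Finset.range (i + 1), |f i j| ≤
      ∑ i ∈ Finset.Icc 3 d, ∑ j ∈ Finset.range (i + 1), |a i j| * C :=
    Finset.sum_le_sum fun i hi => Finset.sum_le_sum fun j hj => h i hi j hj
  refine h2.trans ?_
  rw [Sabs, Finset.sum_mul]
  exact le_of_eq (Finset.sum_congr rfl fun i _ => (Finset.sum_mul _ _ _).symm)

lemma dblSum_abs (d : ℕ) (a : ℕ → ℕ → ℝ) (x y : ℝ) (hx : |x| ≤ 11) (hy : |y| ≤ 11) :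
    |dblSum d a x y| ≤ Sabs d a * 11 ^ d := by
  refine dbl_bound d a _ _ (fun i hi j hj => ?_)
  have hid : i ≤ d := (Finset.mem_Icc.mp hi).2
  have hji : j ≤ i := Nat.lt_succ_iff.mp (Finset.mem_range.mp hj)
  rw [abs_mul, abs_mul, abs_pow, abs_pow]
  have hxp : |x| ^ (i - j) ≤ 11 ^ (i - j) := pow_le_pow_left₀ (abs_nonneg _) hx _
  have hyp : |y| ^ j ≤ 11 ^ j := pow_le_pow_left₀ (abs_nonneg _) hy _
  have h2 : (11:ℝ) ^ (i - j) * 11 ^ j = 11 ^ i := by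
    rw [← pow_add, Nat.sub_add_cancel hji]
  have h3 : (11:ℝ) ^ i ≤ 11 ^ d := pow_le_pow_right₀ (by norm_num) hid
  calc |a i j| * |x| ^ (i - j) * |y| ^ j ≤ |a i j| * 11 ^ (i - j) * 11 ^ j := by
        apply mul_le_mul (mul_le_mul_of_nonneg_left hxp (abs_nonneg _)) hyp (by positivity)
          (by positivity)
    _ = |a i j| * 11 ^ i := by rw [mul_assoc, h2]
    _ ≤ |a i j| * 11 ^ d := mul_le_mul_of_nonneg_left h3 (abs_nonneg _)

lemma dblSum_lip (d : ℕ) (a : ℕ → ℕ → ℝ) (x y x' y' : ℝ)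
    (hx : |x| ≤ 11) (hy : |y| ≤ 11) (hx' : |x'| ≤ 11) (hy' : |y'| ≤ 11) :
    |dblSum d a x y - dblSum d a x' y'| ≤
      Sabs d a * ((d * 11 ^ d) * (|x - x'| + |y - y'|)) := by
  rw [dblSum, dblSum, ← Finset.sum_sub_distrib]
  have : ∀ i ∈ Finset.Icc 3 d,
      (∑ j ∈ Finset.range (i+1), a i j * x ^ (i-j) * y ^ j)
      - ∑ j ∈ Finset.range (i+1), a i j * x' ^ (i-j) * y' ^ j
      = ∑ j ∈ Finset.range (i+1), (a i j * x ^ (i-j) * y ^ j - a i j * x' ^ (i-j) * y' ^ j) := by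
    intro i _
    rw [Finset.sum_sub_distrib]
  rw [Finset.sum_congr rfl this]
  refine dbl_bound d a _ _ (fun i hi j hj => ?_)
  have hid : i ≤ d := (Finset.mem_Icc.mp hi).2
  have hji : j ≤ i := Nat.lt_succ_iff.mp (Finset.mem_range.mp hj)
  have e : a i j * x ^ (i-j) * y ^ j - a i j * x' ^ (i-j) * y' ^ j
      = a i j * (x ^ (i-j) * y ^ j - x' ^ (i-j) * y' ^ j) := by ring
  rw [e, abs_mul]
  apply mul_le_mul_of_nonneg_left _ (abs_nonneg _)
  exact prod_lip d (i - j) j (by omega) x y x' y' hx hy hx' hy'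

end Stmt2
namespace Stmt2

lemma sum_pm (d : ℕ) (δ : ℝ) (hδ : 0 ≤ δ) (b : ℕ → ℝ)
    (hb : ∀ i, 2 ≤ i → i ≤ d → |b i| ≤ δ) :
    |(∑ i ∈ Finset.range (d+1), b i * (1:ℝ) ^ i) +
      (∑ i ∈ Finset.range (d+1), b i * (-1:ℝ) ^ i) -
      2 * ∑ i ∈ Finset.range (d+1), b i * (0:ℝ) ^ i| ≤ 2 * ((d:ℝ)+1) * δ := by
  rw [Finset.mul_sum, ← Finset.sum_add_distrib, ← Finset.sum_sub_distrib]
  have h1 : ∀ i ∈ Finset.range (d+1),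
      |b i * (1:ℝ) ^ i + b i * (-1:ℝ) ^ i - 2 * (b i * (0:ℝ) ^ i)| ≤ 2 * δ := by
    intro i hi
    have hid : i ≤ d := Nat.lt_succ_iff.mp (Finset.mem_range.mp hi)
    match i with
    | 0 =>
      have e : b 0 * (1:ℝ) ^ 0 + b 0 * (-1:ℝ) ^ 0 - 2 * (b 0 * (0:ℝ) ^ 0) = 0 := by ring
      rw [e, abs_zero]; positivity
    | 1 =>
      have e : b 1 * (1:ℝ) ^ 1 + b 1 * (-1:ℝ) ^ 1 - 2 * (b 1 * (0:ℝ) ^ 1) = 0 := by ring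
      rw [e, abs_zero]; positivity
    | (k+2) =>
      have h0 : ((0:ℝ)) ^ (k+2) = 0 := by
        exact zero_pow (by omega)
      have hbk := hb (k+2) (by omega) hid
      rcases neg_one_pow_eq_or ℝ (k+2) with h | h <;> rw [h, h0] <;> simp
      · calc |b (k+2) + b (k+2)| ≤ |b (k+2)| + |b (k+2)| := abs_add_le _ _
          _ ≤ δ + δ := add_le_add hbk hbk
          _ = 2 * δ := by ring
      · positivity
  calc |∑ i ∈ Finset.range (d+1), (b i * (1:ℝ) ^ i + b i * (-1:ℝ) ^ i - 2 * (b i * (0:ℝ) ^ i))|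
      ≤ ∑ i ∈ Finset.range (d+1), |b i * (1:ℝ) ^ i + b i * (-1:ℝ) ^ i - 2 * (b i * (0:ℝ) ^ i)| :=
        Finset.abs_sum_le_sum_abs _ _
    _ ≤ ∑ _i ∈ Finset.range (d+1), 2 * δ := Finset.sum_le_sum h1
    _ = 2 * ((d:ℝ)+1) * δ := by
        rw [Finset.sum_const, Finset.card_range, nsmul_eq_mul]
        push_cast
        ring

/-- First-branch part `R₁`. -/
def Rone (d : ℕ) (a : ℕ → ℕ → ℝ) (t : ℝ) (v : ℝ × ℝ) : ℝ :=
  dblSum d a v.1 (v.2 + t) + dblSum d a (-v.1) (-v.2 + t) - 2 * dblSum d a 0 t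

/-- Second-branch part `R₂`. -/
def Rtwo (d : ℕ) (a : ℕ → ℕ → ℝ) (t : ℝ) (v : ℝ × ℝ) : ℝ :=
  dblSum d a (t - v.2) v.1 + dblSum d a (v.2 + t) (-v.1) - 2 * dblSum d a t 0

lemma bad_Q1 (d : ℕ) (ε KL t : ℝ) (hδ : 0 ≤ ε / (10 ^ (5*d) * KL)) (a : ℕ → ℕ → ℝ)
    (v : ℝ × ℝ) (hb : IsBadLine d (hpoly d a) ε KL t v) (hbr : |v.2| ≤ |v.1|) :
    |v.1 * v.2 + a 2 0 * v.1 ^ 2 + a 2 2 * v.2 ^ 2 + Rone d a t v / 2|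
      ≤ ((d:ℝ)+1) * (ε / (10 ^ (5*d) * KL)) := by
  obtain ⟨c, hc, hside, -⟩ := hb
  have hM1 : Minv t v (1, 0) = (v.1, v.2 + t) := by
    simp only [Minv, if_pos hbr, Prod.mk.injEq]
    constructor <;> ring
  have hM2 : Minv t v (-1, 0) = (-v.1, -v.2 + t) := by
    simp only [Minv, if_pos hbr, Prod.mk.injEq]
    constructor <;> ring
  have hM3 : Minv t v (0, 0) = ((0:ℝ), t) := by
    simp only [Minv, if_pos hbr, Prod.mk.injEq]
    constructor <;> ring
  have h1 := hc 1 0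
  have h2 := hc (-1) 0
  have h3 := hc 0 0
  rw [hM1] at h1
  rw [hM2] at h2
  rw [hM3] at h3
  simp only [] at h1 h2 h3
  have hin : ∀ (ξ : ℝ) (i : ℕ),
      ∑ j ∈ Finset.range (i+1), c i j * ξ ^ (i-j) * (0:ℝ) ^ j = c i 0 * ξ ^ i := by
    intro ξ i
    rw [Finset.sum_eq_single 0]
    · simp
    · intro j _ hj
      rw [zero_pow hj, mul_zero]
    · intro h
      exact absurd (Finset.mem_range.mpr (Nat.succ_pos i)) h
  rw [Finset.sum_congr rfl fun i _ => hin 1 i] at h1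
  rw [Finset.sum_congr rfl fun i _ => hin (-1) i] at h2
  rw [Finset.sum_congr rfl fun i _ => hin 0 i] at h3
  have hG : |hpoly d a v.1 (v.2 + t) + hpoly d a (-v.1) (-v.2 + t) - 2 * hpoly d a 0 t|
      ≤ 2 * ((d:ℝ)+1) * (ε / (10 ^ (5*d) * KL)) := by
    rw [h1, h2, h3]
    exact sum_pm d _ hδ (fun i => c i 0)
      (fun i h2i hid => hside hbr i (Finset.mem_Icc.mpr ⟨h2i, hid⟩))
  have hid : hpoly d a v.1 (v.2 + t) + hpoly d a (-v.1) (-v.2 + t) - 2 * hpoly d a 0 t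
      = 2 * (v.1 * v.2 + a 2 0 * v.1 ^ 2 + a 2 2 * v.2 ^ 2 + Rone d a t v / 2) := by
    simp only [hpoly_split, Rone]
    ring
  rw [hid, abs_mul, abs_two] at hG
  linarith

lemma bad_Q2 (d : ℕ) (ε KL t : ℝ) (hδ : 0 ≤ ε / (10 ^ (5*d) * KL)) (a : ℕ → ℕ → ℝ)
    (v : ℝ × ℝ) (hb : IsBadLine d (hpoly d a) ε KL t v) (hbr : ¬ |v.2| ≤ |v.1|) :
    |v.1 * v.2 - a 2 0 * v.2 ^ 2 - a 2 2 * v.1 ^ 2 - Rtwo d a t v / 2|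
      ≤ ((d:ℝ)+1) * (ε / (10 ^ (5*d) * KL)) := by
  obtain ⟨c, hc, -, hside⟩ := hb
  have hM1 : Minv t v (0, 1) = (t - v.2, v.1) := by
    simp only [Minv, if_neg hbr, Prod.mk.injEq]
    constructor <;> ring
  have hM2 : Minv t v (0, -1) = (v.2 + t, -v.1) := by
    simp only [Minv, if_neg hbr, Prod.mk.injEq]
    constructor <;> ring
  have hM3 : Minv t v (0, 0) = (t, (0:ℝ)) := by
    simp only [Minv, if_neg hbr, Prod.mk.injEq]
    constructor <;> ring
  have h1 := hc 0 1
  have h2 := hc 0 (-1)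
  have h3 := hc 0 0
  rw [hM1] at h1
  rw [hM2] at h2
  rw [hM3] at h3
  simp only [] at h1 h2 h3
  have hin : ∀ (η : ℝ) (i : ℕ),
      ∑ j ∈ Finset.range (i+1), c i j * (0:ℝ) ^ (i-j) * η ^ j = c i i * η ^ i := by
    intro η i
    rw [Finset.sum_eq_single i]
    · simp
    · intro j hj hji
      have : j < i := lt_of_le_of_ne (Nat.lt_succ_iff.mp (Finset.mem_range.mp hj)) hji
      rw [zero_pow (Nat.sub_ne_zero_of_lt this)]
      ring
    · intro h
      exact absurd (Finset.mem_range.mpr (Nat.lt_succ_self i)) h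
  rw [Finset.sum_congr rfl fun i _ => hin 1 i] at h1
  rw [Finset.sum_congr rfl fun i _ => hin (-1) i] at h2
  rw [Finset.sum_congr rfl fun i _ => hin 0 i] at h3
  have hG : |hpoly d a (t - v.2) v.1 + hpoly d a (v.2 + t) (-v.1) - 2 * hpoly d a t 0|
      ≤ 2 * ((d:ℝ)+1) * (ε / (10 ^ (5*d) * KL)) := by
    rw [h1, h2, h3]
    exact sum_pm d _ hδ (fun i => c i i)
      (fun i h2i hid => hside hbr i (Finset.mem_Icc.mpr ⟨h2i, hid⟩))
  have hid : hpoly d a (t - v.2) v.1 + hpoly d a (v.2 + t) (-v.1) - 2 * hpoly d a t 0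
      = 2 * (-(v.1 * v.2 - a 2 0 * v.2 ^ 2 - a 2 2 * v.1 ^ 2 - Rtwo d a t v / 2)) := by
    simp only [hpoly_split, Rtwo]
    ring
  rw [hid, abs_mul, abs_two, abs_neg] at hG
  linarith

end Stmt2
namespace Stmt2

lemma tri2 (a b : ℝ) : |a - b| ≤ |a| + |b| := by
  rw [sub_eq_add_neg]
  exact (abs_add_le _ _).trans (by rw [abs_neg])

lemma abstract_pair (ε dd o k o' k' A B r r' : ℝ)
    (hε0 : 0 < ε) (hε1 : ε ≤ 1/1000) (hdd0 : 0 ≤ dd) (hddε : dd ≤ ε)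
    (hcirc : o^2 + k^2 = 1) (hcirc' : o'^2 + k'^2 = 1)
    (hk : k^2 ≤ o^2) (hk' : k'^2 ≤ o'^2)
    (ho : 0 ≤ o) (ho' : 0 ≤ o')
    (hA : |A| ≤ ε) (hB : |B| ≤ ε) (hr : |r| ≤ ε/100) (hr' : |r'| ≤ ε/100)
    (hq : |k*o + A*o^2 + B*k^2 + r| ≤ dd) (hq' : |k'*o' + A*o'^2 + B*k'^2 + r'| ≤ dd)
    (hlip : |r - r'| ≤ ε/100 * (|o - o'| + |k - k'|)) :
    |k - k'| ≤ 8*dd ∧ |o - o'| ≤ |k - k'| := by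
  have hoge : 1/2 ≤ o := by nlinarith only [hcirc, hk, ho]
  have ho'ge : 1/2 ≤ o' := by nlinarith only [hcirc', hk', ho']
  have ho1 : o ≤ 1 := by nlinarith only [hcirc, sq_nonneg k, ho]
  have ho'1 : o' ≤ 1 := by nlinarith only [hcirc', sq_nonneg k', ho']
  have hosq : o^2 ≤ 1 := by nlinarith only [hcirc, sq_nonneg k]
  have ho'sq : o'^2 ≤ 1 := by nlinarith only [hcirc', sq_nonneg k']
  have hksq : k^2 ≤ 1 := by nlinarith only [hcirc, sq_nonneg o]
  have hk'sq : k'^2 ≤ 1 := by nlinarith only [hcirc', sq_nonneg o']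
  obtain ⟨hqa, hqb⟩ := abs_le.mp hq
  obtain ⟨hq'a, hq'b⟩ := abs_le.mp hq'
  obtain ⟨hAa, hAb⟩ := abs_le.mp hA
  obtain ⟨hBa, hBb⟩ := abs_le.mp hB
  obtain ⟨hra, hrb⟩ := abs_le.mp hr
  obtain ⟨hr'a, hr'b⟩ := abs_le.mp hr'
  have hAoU : A*o^2 ≤ ε := by nlinarith only [hAb, sq_nonneg o, hosq, hε0]
  have hAoL : -ε ≤ A*o^2 := by nlinarith only [hAa, sq_nonneg o, hosq, hε0]
  have hBkU : B*k^2 ≤ ε := by nlinarith only [hBb, sq_nonneg k, hksq, hε0]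
  have hBkL : -ε ≤ B*k^2 := by nlinarith only [hBa, sq_nonneg k, hksq, hε0]
  have hkoU : k*o ≤ dd + ε + ε + ε/100 := by linarith only [hqb, hAoL, hBkL, hra]
  have hkoL : -(dd + ε + ε + ε/100) ≤ k*o := by linarith only [hqa, hAoU, hBkU, hrb]
  have hk8 : |k| ≤ 8*ε := by
    rcases le_or_gt 0 k with hks | hks
    · rw [abs_of_nonneg hks]
      have hp := mul_nonneg hks (by linarith only [hoge] : (0:ℝ) ≤ o - 1/2)
      nlinarith only [hp, hkoU, hddε, hε0]
    · rw [abs_of_neg hks]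
      have hp := mul_nonneg (by linarith only [hks] : (0:ℝ) ≤ -k)
        (by linarith only [hoge] : (0:ℝ) ≤ o - 1/2)
      nlinarith only [hp, hkoL, hddε, hε0]
  have hA'oU : A*o'^2 ≤ ε := by nlinarith only [hAb, sq_nonneg o', ho'sq, hε0]
  have hA'oL : -ε ≤ A*o'^2 := by nlinarith only [hAa, sq_nonneg o', ho'sq, hε0]
  have hB'kU : B*k'^2 ≤ ε := by nlinarith only [hBb, sq_nonneg k', hk'sq, hε0]
  have hB'kL : -ε ≤ B*k'^2 := by nlinarith only [hBa, sq_nonneg k', hk'sq, hε0]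
  have hk'oU : k'*o' ≤ dd + ε + ε + ε/100 := by linarith only [hq'b, hA'oL, hB'kL, hr'a]
  have hk'oL : -(dd + ε + ε + ε/100) ≤ k'*o' := by linarith only [hq'a, hA'oU, hB'kU, hr'b]
  have hk'8 : |k'| ≤ 8*ε := by
    rcases le_or_gt 0 k' with hks | hks
    · rw [abs_of_nonneg hks]
      have hp := mul_nonneg hks (by linarith only [ho'ge] : (0:ℝ) ≤ o' - 1/2)
      nlinarith only [hp, hk'oU, hddε, hε0]
    · rw [abs_of_neg hks]
      have hp := mul_nonneg (by linarith only [hks] : (0:ℝ) ≤ -k')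
        (by linarith only [ho'ge] : (0:ℝ) ≤ o' - 1/2)
      nlinarith only [hp, hk'oL, hddε, hε0]
  set D := |k - k'| with hD
  have hD0 : 0 ≤ D := abs_nonneg _
  have heD : ε*D ≤ D/1000 := by
    have := mul_le_mul_of_nonneg_right hε1 hD0
    linarith only [this]
  have hee : ε*ε*D ≤ D/1000000 := by
    have he2 : ε*ε ≤ 1/1000000 := by nlinarith only [hε0, hε1]
    have := mul_le_mul_of_nonneg_right he2 hD0
    linarith only [this]
  have hoo : |o - o'| ≤ 16*ε*D := by
    have e : (o - o')*(o + o') = (k' - k)*(k' + k) := by linear_combination hcirc - hcirc'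
    have h3 : |o - o'| ≤ |o - o'| * (o+o') := by
      have := mul_nonneg (abs_nonneg (o - o')) (by linarith only [hoge, ho'ge] : (0:ℝ) ≤ o + o' - 1)
      nlinarith only [this]
    have h4 : |o - o'| * (o+o') = |(o - o')*(o+o')| := by
      rw [abs_mul, abs_of_nonneg (by linarith only [hoge, ho'ge] : (0:ℝ) ≤ o + o')]
    have h5 : |(k' - k)*(k' + k)| ≤ D * (16*ε) := by
      rw [abs_mul]
      have e1 : |k' - k| = D := by rw [hD, abs_sub_comm]
      rw [e1]
      have e2 : |k' + k| ≤ 16*ε := by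
        refine (abs_add_le _ _).trans ?_
        linarith only [hk8, hk'8]
      exact mul_le_mul_of_nonneg_left e2 hD0
    calc |o - o'| ≤ |o - o'| * (o+o') := h3
      _ = |(o - o')*(o+o')| := h4
      _ = |(k' - k)*(k' + k)| := by rw [e]
      _ ≤ D * (16*ε) := h5
      _ = 16*ε*D := by ring
  have hoo' : |o - o'| ≤ D := by linarith only [hoo, heD, hD0]
  refine ⟨?_, hoo'⟩
  have main : o*(k - k') =
      ((k*o + A*o^2 + B*k^2 + r) - (k'*o' + A*o'^2 + B*k'^2 + r'))
      - (k'*(o - o')) - (A*((o - o')*(o + o'))) - (B*((k - k')*(k + k'))) - (r - r') := by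
    ring
  have b5 : |(k*o + A*o^2 + B*k^2 + r) - (k'*o' + A*o'^2 + B*k'^2 + r')| ≤ 2*dd := by
    refine (tri2 _ _).trans ?_
    linarith only [hq, hq']
  have b1 : |k'*(o - o')| ≤ 8*ε*(16*ε*D) := by
    rw [abs_mul]
    exact mul_le_mul hk'8 hoo (abs_nonneg _) (by positivity)
  have b2 : |A*((o - o')*(o + o'))| ≤ ε*(16*ε*D*2) := by
    rw [abs_mul, abs_mul]
    have h6 : |o + o'| ≤ 2 := by
      rw [abs_of_nonneg (by linarith only [hoge, ho'ge] : (0:ℝ) ≤ o + o')]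
      linarith only [ho1, ho'1]
    have h7 : |o - o'| * |o + o'| ≤ (16*ε*D)*2 :=
      mul_le_mul hoo h6 (abs_nonneg _) (by positivity)
    calc |A| * (|o - o'| * |o + o'|) ≤ ε * ((16*ε*D)*2) :=
        mul_le_mul hA h7 (by positivity) (le_of_lt hε0)
      _ = ε*(16*ε*D*2) := by ring
  have b3 : |B*((k - k')*(k + k'))| ≤ ε*(D*(16*ε)) := by
    rw [abs_mul, abs_mul]
    have h6 : |k + k'| ≤ 16*ε := by
      refine (abs_add_le _ _).trans ?_
      linarith only [hk8, hk'8]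
    have h7 : |k - k'| * |k + k'| ≤ D*(16*ε) :=
      mul_le_mul_of_nonneg_left h6 hD0
    exact mul_le_mul hB h7 (by positivity) (le_of_lt hε0)
  have b4 : |r - r'| ≤ ε/100*(16*ε*D + D) := by
    refine hlip.trans ?_
    have h8 : |o - o'| + |k - k'| ≤ 16*ε*D + D := by
      linarith only [hoo]
    exact mul_le_mul_of_nonneg_left h8 (by positivity)
  have tri5 : ∀ x1 x2 x3 x4 x5 : ℝ, |x1 - x2 - x3 - x4 - x5| ≤ |x1| + |x2| + |x3| + |x4| + |x5| := by
    intro x1 x2 x3 x4 x5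
    have h1 := tri2 (x1 - x2 - x3 - x4) x5
    have h2 := tri2 (x1 - x2 - x3) x4
    have h3 := tri2 (x1 - x2) x3
    have h4 := tri2 x1 x2
    linarith only [h1, h2, h3, h4]
  have tri : |o*(k - k')| ≤ 2*dd + 8*ε*(16*ε*D) + ε*(16*ε*D*2) + ε*(D*(16*ε))
      + ε/100*(16*ε*D + D) := by
    rw [main]
    refine (tri5 _ _ _ _ _).trans ?_
    linarith only [b5, b1, b2, b3, b4]
  have hlow : (1/2)*D ≤ |o*(k - k')| := by
    rw [abs_mul, abs_of_nonneg ho]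
    exact mul_le_mul_of_nonneg_right hoge hD0
  linarith only [tri, hlow, hee, heD, hD0, hdd0]

end Stmt2
namespace Stmt2

/-- The key coordinate of a direction. -/
def keyf (v : ℝ × ℝ) : ℝ := if |v.2| ≤ |v.1| then v.2 else v.1

/-- The class of a direction. -/
def cls (v : ℝ × ℝ) : Fin 4 :=
  if |v.2| ≤ |v.1| then (if 0 ≤ v.1 then 0 else 1) else (if 0 ≤ v.2 then 2 else 3)

lemma abstract_pair' (ε dd o k o' k' A B r r' : ℝ)
    (hε0 : 0 < ε) (hε1 : ε ≤ 1/1000) (hdd0 : 0 ≤ dd) (hddε : dd ≤ ε)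
    (hcirc : o^2 + k^2 = 1) (hcirc' : o'^2 + k'^2 = 1)
    (hk : k^2 ≤ o^2) (hk' : k'^2 ≤ o'^2)
    (hsgn : 0 ≤ o * o')
    (hA : |A| ≤ ε) (hB : |B| ≤ ε) (hr : |r| ≤ ε/100) (hr' : |r'| ≤ ε/100)
    (hq : |k*o + A*o^2 + B*k^2 + r| ≤ dd) (hq' : |k'*o' + A*o'^2 + B*k'^2 + r'| ≤ dd)
    (hlip : |r - r'| ≤ ε/100 * (|o - o'| + |k - k'|)) :
    |k - k'| ≤ 8*dd ∧ |o - o'| ≤ |k - k'| := by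
  rcases le_or_gt 0 o with h | h
  · have ho2 : 1/2 ≤ o := by nlinarith only [hcirc, hk, h]
    have ho' : 0 ≤ o' := by nlinarith only [hsgn, ho2]
    exact abstract_pair ε dd o k o' k' A B r r' hε0 hε1 hdd0 hddε hcirc hcirc' hk hk' h ho'
      hA hB hr hr' hq hq' hlip
  · have ho2 : o ≤ -(1/2) := by nlinarith only [hcirc, hk, h]
    have ho' : o' ≤ 0 := by nlinarith only [hsgn, ho2]
    have hcircn : (-o)^2 + (-k)^2 = 1 := by linear_combination hcirc
    have hcircn' : (-o')^2 + (-k')^2 = 1 := by linear_combination hcirc'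
    have hkn : (-k)^2 ≤ (-o)^2 := by nlinarith only [hk]
    have hkn' : (-k')^2 ≤ (-o')^2 := by nlinarith only [hk']
    have hqn : |(-k)*(-o) + A*(-o)^2 + B*(-k)^2 + r| ≤ dd := by
      rw [show (-k)*(-o) + A*(-o)^2 + B*(-k)^2 + r = k*o + A*o^2 + B*k^2 + r from by ring]
      exact hq
    have hqn' : |(-k')*(-o') + A*(-o')^2 + B*(-k')^2 + r'| ≤ dd := by
      rw [show (-k')*(-o') + A*(-o')^2 + B*(-k')^2 + r' = k'*o' + A*o'^2 + B*k'^2 + r' from by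
        ring]
      exact hq'
    have hlipn : |r - r'| ≤ ε/100 * (|(-o) - (-o')| + |(-k) - (-k')|) := by
      rw [show (-o) - (-o') = -(o - o') from by ring, show (-k) - (-k') = -(k - k') from by ring,
        abs_neg, abs_neg]
      exact hlip
    have hres := abstract_pair ε dd (-o) (-k) (-o') (-k') A B r r' hε0 hε1 hdd0 hddε
      hcircn hcircn' hkn hkn' (by linarith) (by linarith) hA hB hr hr' hqn hqn' hlipn
    rw [show (-k) - (-k') = -(k - k') from by ring, show (-o) - (-o') = -(o - o') from by ring,
      abs_neg, abs_neg] at hres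
    exact hres

lemma pair_bound (d : ℕ) (hd : 3 ≤ d) (ε KL : ℝ) (hε0 : 0 < ε) (hε1 : ε ≤ 1/1000)
    (hKL : 1 ≤ KL) (a : ℕ → ℕ → ℝ) (hsm : CoeffSmall d ε a) (t : ℝ) (ht : |t| ≤ 10)
    (v v' : ℝ × ℝ) (hv : v.1^2 + v.2^2 = 1) (hv' : v'.1^2 + v'.2^2 = 1)
    (hb : IsBadLine d (hpoly d a) ε KL t v) (hb' : IsBadLine d (hpoly d a) ε KL t v')
    (hc : cls v = cls v') :
    |keyf v - keyf v'| ≤ 8*(((d:ℝ)+1) * (ε/(10^(5*d)*KL))) ∧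
      eudist v v' ≤ 2*|keyf v - keyf v'| := by
  have hKL0 : (0:ℝ) < KL := lt_of_lt_of_le one_pos hKL
  have hX : (0:ℝ) < 10^(5*d)*KL := by positivity
  have hδ0 : 0 ≤ ε/(10^(5*d)*KL) := by positivity
  set dd := ((d:ℝ)+1) * (ε/(10^(5*d)*KL)) with hdddef
  have hdd0 : 0 ≤ dd := by positivity
  have hddε : dd ≤ ε := by
    have h1 : ((d:ℝ)+1) ≤ 10^(5*d) :=
      (num2 d).trans (pow_le_pow_right₀ (by norm_num) (by omega))
    have hpp : (0:ℝ) < 10^(5*d) := pow_pos (by norm_num) (5*d)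
    have h2 : ((d:ℝ)+1) ≤ 10^(5*d)*KL := by nlinarith only [h1, hKL, hpp]
    rw [hdddef, show ((d:ℝ)+1) * (ε/(10^(5*d)*KL)) = ((d:ℝ)+1)*ε/(10^(5*d)*KL) from
      (mul_div_assoc _ _ _).symm, div_le_iff₀ hX]
    have h3 := mul_le_mul_of_nonneg_right h2 hε0.le
    nlinarith only [h3]
  -- coefficient bounds
  have hsm' : |a 2 0| + |a 2 2| + 100^d * Sabs d a ≤ ε := hsm
  have hSa0 := Sabs_nonneg d a
  have hp100 : (0:ℝ) < 100^d := by positivity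
  have ha20 : |a 2 0| ≤ ε := by
    nlinarith only [hsm', abs_nonneg (a 2 2), mul_nonneg hp100.le hSa0]
  have ha22 : |a 2 2| ≤ ε := by
    nlinarith only [hsm', abs_nonneg (a 2 0), mul_nonneg hp100.le hSa0]
  have hSa : 100^d * Sabs d a ≤ ε := by
    nlinarith only [hsm', abs_nonneg (a 2 0), abs_nonneg (a 2 2)]
  have hn1 : 100*(d:ℝ)*11^d ≤ 100^d := num1 d hd
  have h11p : (0:ℝ) ≤ 11^d := by positivity
  have hd3 : (3:ℝ) ≤ (d:ℝ) := by exact_mod_cast hd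
  have h200 : (200:ℝ)*11^d ≤ 100^d := by
    nlinarith only [hn1, hd3, h11p]
  -- unit bounds
  have hv1 : |v.1| ≤ 1 := by
    rw [← sq_abs v.1] at hv
    nlinarith only [hv, sq_nonneg v.2, abs_nonneg v.1]
  have hv2 : |v.2| ≤ 1 := by
    rw [← sq_abs v.2] at hv
    nlinarith only [hv, sq_nonneg v.1, abs_nonneg v.2]
  have hv'1 : |v'.1| ≤ 1 := by
    rw [← sq_abs v'.1] at hv'
    nlinarith only [hv', sq_nonneg v'.2, abs_nonneg v'.1]
  have hv'2 : |v'.2| ≤ 1 := by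
    rw [← sq_abs v'.2] at hv'
    nlinarith only [hv', sq_nonneg v'.1, abs_nonneg v'.2]
  have hv1' : |v.1| ≤ 11 := hv1.trans (by norm_num)
  have hv2' : |v.2| ≤ 11 := hv2.trans (by norm_num)
  have hv'1' : |v'.1| ≤ 11 := hv'1.trans (by norm_num)
  have hv'2' : |v'.2| ≤ 11 := hv'2.trans (by norm_num)
  have hnv1 : |-v.1| ≤ 11 := by rw [abs_neg]; exact hv1'
  have hnv1' : |-v'.1| ≤ 11 := by rw [abs_neg]; exact hv'1'
  have ht11 : |t| ≤ 11 := ht.trans (by norm_num)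
  have h0le : |(0:ℝ)| ≤ 11 := by norm_num
  have hvt2 : |v.2 + t| ≤ 11 := (abs_add_le _ _).trans (by linarith)
  have hv't2 : |v'.2 + t| ≤ 11 := (abs_add_le _ _).trans (by linarith)
  have hnvt2 : |-v.2 + t| ≤ 11 := (abs_add_le _ _).trans (by rw [abs_neg]; linarith)
  have hnv't2 : |-v'.2 + t| ≤ 11 := (abs_add_le _ _).trans (by rw [abs_neg]; linarith)
  have htv2 : |t - v.2| ≤ 11 := (tri2 _ _).trans (by linarith)
  have htv'2 : |t - v'.2| ≤ 11 := (tri2 _ _).trans (by linarith)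
  -- R size helper
  have hRsize : ∀ x1 y1 x2 y2 x3 y3 : ℝ, |x1| ≤ 11 → |y1| ≤ 11 → |x2| ≤ 11 → |y2| ≤ 11 →
      |x3| ≤ 11 → |y3| ≤ 11 →
      |(dblSum d a x1 y1 + dblSum d a x2 y2 - 2*dblSum d a x3 y3)/2| ≤ ε/100 := by
    intro x1 y1 x2 y2 x3 y3 h1 h2 h3 h4 h5 h6
    have b1 := dblSum_abs d a x1 y1 h1 h2
    have b2 := dblSum_abs d a x2 y2 h3 h4
    have b3 := dblSum_abs d a x3 y3 h5 h6
    have htri : |dblSum d a x1 y1 + dblSum d a x2 y2 - 2*dblSum d a x3 y3| ≤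
        4*(Sabs d a * 11^d) := by
      have e1 := abs_add_le (dblSum d a x1 y1) (dblSum d a x2 y2)
      have e2 := tri2 (dblSum d a x1 y1 + dblSum d a x2 y2) (2*dblSum d a x3 y3)
      have e3 : |2*dblSum d a x3 y3| = 2*|dblSum d a x3 y3| := by
        rw [abs_mul, abs_two]
      linarith
    rw [abs_div, abs_two]
    have hfin : 200*(Sabs d a * 11^d) ≤ ε := by
      have := mul_le_mul_of_nonneg_right h200 hSa0
      nlinarith only [this, hSa]
    linarith
  -- branch split
  by_cases hbr : |v.2| ≤ |v.1|
  · -- branch 1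
    have hbr' : |v'.2| ≤ |v'.1| := by
      by_contra hno
      simp only [cls, if_pos hbr, if_neg hno] at hc
      split_ifs at hc <;> simp_all
    have hsgn : 0 ≤ v.1 * v'.1 := by
      simp only [cls, if_pos hbr, if_pos hbr'] at hc
      split_ifs at hc with hs1 hs2 hs2
      · exact mul_nonneg hs1 hs2
      · exact absurd hc (by decide)
      · exact absurd hc (by decide)
      · push_neg at hs1 hs2
        exact le_of_lt (mul_pos_of_neg_of_neg hs1 hs2)
    have hQ := bad_Q1 d ε KL t hδ0 a v hb hbr
    have hQ' := bad_Q1 d ε KL t hδ0 a v' hb' hbr'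
    have hsq : v.2^2 ≤ v.1^2 := by
      rw [← sq_abs v.2, ← sq_abs v.1]
      exact pow_le_pow_left₀ (abs_nonneg _) hbr 2
    have hsq' : v'.2^2 ≤ v'.1^2 := by
      rw [← sq_abs v'.2, ← sq_abs v'.1]
      exact pow_le_pow_left₀ (abs_nonneg _) hbr' 2
    have hr1 : |Rone d a t v / 2| ≤ ε/100 := hRsize _ _ _ _ _ _ hv1' hvt2 hnv1 hnvt2 h0le ht11
    have hr1' : |Rone d a t v' / 2| ≤ ε/100 :=
      hRsize _ _ _ _ _ _ hv'1' hv't2 hnv1' hnv't2 h0le ht11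
    have hlipR : |Rone d a t v / 2 - Rone d a t v' / 2| ≤
        ε/100 * (|v.1 - v'.1| + |v.2 - v'.2|) := by
      have l1 := dblSum_lip d a v.1 (v.2+t) v'.1 (v'.2+t) hv1' hvt2 hv'1' hv't2
      have l2 := dblSum_lip d a (-v.1) (-v.2+t) (-v'.1) (-v'.2+t) hnv1 hnvt2 hnv1' hnv't2
      rw [show v.2+t-(v'.2+t) = v.2 - v'.2 from by ring] at l1
      rw [show -v.1-(-v'.1) = -(v.1 - v'.1) from by ring,
        show -v.2+t-(-v'.2+t) = -(v.2 - v'.2) from by ring, abs_neg, abs_neg] at l2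
      have e : Rone d a t v / 2 - Rone d a t v' / 2 =
          ((dblSum d a v.1 (v.2+t) - dblSum d a v'.1 (v'.2+t)) +
           (dblSum d a (-v.1) (-v.2+t) - dblSum d a (-v'.1) (-v'.2+t)))/2 := by
        rw [Rone, Rone]; ring
      rw [e]
      have habs : |((dblSum d a v.1 (v.2+t) - dblSum d a v'.1 (v'.2+t)) +
           (dblSum d a (-v.1) (-v.2+t) - dblSum d a (-v'.1) (-v'.2+t)))/2| ≤
          Sabs d a * (d * 11^d * (|v.1 - v'.1| + |v.2 - v'.2|)) := by
        rw [abs_div, abs_two]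
        have := abs_add_le (dblSum d a v.1 (v.2+t) - dblSum d a v'.1 (v'.2+t))
          (dblSum d a (-v.1) (-v.2+t) - dblSum d a (-v'.1) (-v'.2+t))
        linarith
      refine habs.trans ?_
      have hcoef : Sabs d a * ((d:ℝ) * 11^d) ≤ ε/100 := by
        have := mul_le_mul_of_nonneg_right hn1 hSa0
        nlinarith only [this, hSa]
      have hΔ0 : 0 ≤ |v.1 - v'.1| + |v.2 - v'.2| := by positivity
      calc Sabs d a * ((d:ℝ) * 11^d * (|v.1 - v'.1| + |v.2 - v'.2|))
          = (Sabs d a * ((d:ℝ) * 11^d)) * (|v.1 - v'.1| + |v.2 - v'.2|) := by ring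
        _ ≤ ε/100 * (|v.1 - v'.1| + |v.2 - v'.2|) :=
            mul_le_mul_of_nonneg_right hcoef hΔ0
    have hq1 : |v.2*v.1 + a 2 0*v.1^2 + a 2 2*v.2^2 + Rone d a t v / 2| ≤ dd := by
      rw [show v.2*v.1 + a 2 0*v.1^2 + a 2 2*v.2^2 + Rone d a t v / 2
        = v.1*v.2 + a 2 0*v.1^2 + a 2 2*v.2^2 + Rone d a t v / 2 from by ring]
      exact hQ
    have hq1' : |v'.2*v'.1 + a 2 0*v'.1^2 + a 2 2*v'.2^2 + Rone d a t v' / 2| ≤ dd := by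
      rw [show v'.2*v'.1 + a 2 0*v'.1^2 + a 2 2*v'.2^2 + Rone d a t v' / 2
        = v'.1*v'.2 + a 2 0*v'.1^2 + a 2 2*v'.2^2 + Rone d a t v' / 2 from by ring]
      exact hQ'
    have hres := abstract_pair' ε dd v.1 v.2 v'.1 v'.2 (a 2 0) (a 2 2)
      (Rone d a t v / 2) (Rone d a t v' / 2) hε0 hε1 hdd0 hddε hv hv' hsq hsq' hsgn
      ha20 ha22 hr1 hr1' hq1 hq1' hlipR
    have hkeq : keyf v = v.2 := by rw [keyf, if_pos hbr]
    have hkeq' : keyf v' = v'.2 := by rw [keyf, if_pos hbr']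
    rw [hkeq, hkeq']
    refine ⟨hres.1, ?_⟩
    have hsqle : (v.1 - v'.1)^2 + (v.2 - v'.2)^2 ≤ (2*|v.2 - v'.2|)^2 := by
      have h1 : (v.1 - v'.1)^2 ≤ (v.2 - v'.2)^2 := by
        rw [← sq_abs (v.1 - v'.1), ← sq_abs (v.2 - v'.2)]
        exact pow_le_pow_left₀ (abs_nonneg _) hres.2 2
      have h2 : (2*|v.2 - v'.2|)^2 = 4*(v.2 - v'.2)^2 := by
        rw [mul_pow, sq_abs]; norm_num
      nlinarith only [h1, h2, sq_nonneg (v.2 - v'.2)]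
    calc eudist v v' = Real.sqrt ((v.1 - v'.1)^2 + (v.2 - v'.2)^2) := rfl
      _ ≤ Real.sqrt ((2*|v.2 - v'.2|)^2) := Real.sqrt_le_sqrt hsqle
      _ = 2*|v.2 - v'.2| := Real.sqrt_sq (by positivity)
  · -- branch 2
    have hbr' : ¬ |v'.2| ≤ |v'.1| := by
      by_contra hno
      simp only [cls, if_neg hbr, if_pos hno] at hc
      split_ifs at hc <;> simp_all
    have hsgn : 0 ≤ v.2 * v'.2 := by
      simp only [cls, if_neg hbr, if_neg hbr'] at hc
      split_ifs at hc with hs1 hs2 hs2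
      · exact mul_nonneg hs1 hs2
      · exact absurd hc (by decide)
      · exact absurd hc (by decide)
      · push_neg at hs1 hs2
        exact le_of_lt (mul_pos_of_neg_of_neg hs1 hs2)
    have hQ := bad_Q2 d ε KL t hδ0 a v hb hbr
    have hQ' := bad_Q2 d ε KL t hδ0 a v' hb' hbr'
    have hsq : v.1^2 ≤ v.2^2 := by
      rw [← sq_abs v.1, ← sq_abs v.2]
      exact pow_le_pow_left₀ (abs_nonneg _) (le_of_lt (not_le.mp hbr)) 2
    have hsq' : v'.1^2 ≤ v'.2^2 := by
      rw [← sq_abs v'.1, ← sq_abs v'.2]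
      exact pow_le_pow_left₀ (abs_nonneg _) (le_of_lt (not_le.mp hbr')) 2
    have hcv : v.2^2 + v.1^2 = 1 := by linarith
    have hcv' : v'.2^2 + v'.1^2 = 1 := by linarith
    have hr2 : |-(Rtwo d a t v / 2)| ≤ ε/100 := by
      rw [abs_neg]
      rw [show Rtwo d a t v = dblSum d a (t - v.2) v.1 + dblSum d a (v.2 + t) (-v.1)
        - 2*dblSum d a t 0 from rfl]
      exact hRsize _ _ _ _ _ _ htv2 hv1' hvt2 hnv1 ht11 h0le
    have hr2' : |-(Rtwo d a t v' / 2)| ≤ ε/100 := by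
      rw [abs_neg]
      rw [show Rtwo d a t v' = dblSum d a (t - v'.2) v'.1 + dblSum d a (v'.2 + t) (-v'.1)
        - 2*dblSum d a t 0 from rfl]
      exact hRsize _ _ _ _ _ _ htv'2 hv'1' hv't2 hnv1' ht11 h0le
    have hlipR : |-(Rtwo d a t v / 2) - -(Rtwo d a t v' / 2)| ≤
        ε/100 * (|v.2 - v'.2| + |v.1 - v'.1|) := by
      have l1 := dblSum_lip d a (t - v.2) v.1 (t - v'.2) v'.1 htv2 hv1' htv'2 hv'1'
      have l2 := dblSum_lip d a (v.2+t) (-v.1) (v'.2+t) (-v'.1) hvt2 hnv1 hv't2 hnv1'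
      rw [show t - v.2 - (t - v'.2) = -(v.2 - v'.2) from by ring, abs_neg] at l1
      rw [show v.2+t-(v'.2+t) = v.2 - v'.2 from by ring,
        show -v.1-(-v'.1) = -(v.1 - v'.1) from by ring, abs_neg] at l2
      have e : -(Rtwo d a t v / 2) - -(Rtwo d a t v' / 2) =
          -(((dblSum d a (t - v.2) v.1 - dblSum d a (t - v'.2) v'.1) +
           (dblSum d a (v.2+t) (-v.1) - dblSum d a (v'.2+t) (-v'.1)))/2) := by
        rw [Rtwo, Rtwo]; ring
      rw [e, abs_neg]
      have habs : |((dblSum d a (t - v.2) v.1 - dblSum d a (t - v'.2) v'.1) +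
           (dblSum d a (v.2+t) (-v.1) - dblSum d a (v'.2+t) (-v'.1)))/2| ≤
          Sabs d a * (d * 11^d * (|v.2 - v'.2| + |v.1 - v'.1|)) := by
        rw [abs_div, abs_two]
        have := abs_add_le (dblSum d a (t - v.2) v.1 - dblSum d a (t - v'.2) v'.1)
          (dblSum d a (v.2+t) (-v.1) - dblSum d a (v'.2+t) (-v'.1))
        linarith
      refine habs.trans ?_
      have hcoef : Sabs d a * ((d:ℝ) * 11^d) ≤ ε/100 := by
        have := mul_le_mul_of_nonneg_right hn1 hSa0
        nlinarith only [this, hSa]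
      have hΔ0 : 0 ≤ |v.2 - v'.2| + |v.1 - v'.1| := by positivity
      calc Sabs d a * ((d:ℝ) * 11^d * (|v.2 - v'.2| + |v.1 - v'.1|))
          = (Sabs d a * ((d:ℝ) * 11^d)) * (|v.2 - v'.2| + |v.1 - v'.1|) := by ring
        _ ≤ ε/100 * (|v.2 - v'.2| + |v.1 - v'.1|) :=
            mul_le_mul_of_nonneg_right hcoef hΔ0
    have hA' : |-(a 2 0)| ≤ ε := by rw [abs_neg]; exact ha20
    have hB' : |-(a 2 2)| ≤ ε := by rw [abs_neg]; exact ha22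
    have hq2 : |v.1*v.2 + (-(a 2 0))*v.2^2 + (-(a 2 2))*v.1^2 + (-(Rtwo d a t v / 2))| ≤ dd := by
      rw [show v.1*v.2 + (-(a 2 0))*v.2^2 + (-(a 2 2))*v.1^2 + (-(Rtwo d a t v / 2))
        = v.1*v.2 - a 2 0*v.2^2 - a 2 2*v.1^2 - Rtwo d a t v / 2 from by ring]
      exact hQ
    have hq2' : |v'.1*v'.2 + (-(a 2 0))*v'.2^2 + (-(a 2 2))*v'.1^2
        + (-(Rtwo d a t v' / 2))| ≤ dd := by
      rw [show v'.1*v'.2 + (-(a 2 0))*v'.2^2 + (-(a 2 2))*v'.1^2 + (-(Rtwo d a t v' / 2))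
        = v'.1*v'.2 - a 2 0*v'.2^2 - a 2 2*v'.1^2 - Rtwo d a t v' / 2 from by ring]
      exact hQ'
    have hres := abstract_pair' ε dd v.2 v.1 v'.2 v'.1 (-(a 2 0)) (-(a 2 2))
      (-(Rtwo d a t v / 2)) (-(Rtwo d a t v' / 2)) hε0 hε1 hdd0 hddε hcv hcv' hsq hsq' hsgn
      hA' hB' hr2 hr2' hq2 hq2' hlipR
    have hkeq : keyf v = v.1 := by rw [keyf, if_neg hbr]
    have hkeq' : keyf v' = v'.1 := by rw [keyf, if_neg hbr']
    rw [hkeq, hkeq']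
    refine ⟨hres.1, ?_⟩
    have hsqle : (v.1 - v'.1)^2 + (v.2 - v'.2)^2 ≤ (2*|v.1 - v'.1|)^2 := by
      have h1 : (v.2 - v'.2)^2 ≤ (v.1 - v'.1)^2 := by
        rw [← sq_abs (v.2 - v'.2), ← sq_abs (v.1 - v'.1)]
        exact pow_le_pow_left₀ (abs_nonneg _) hres.2 2
      have h2 : (2*|v.1 - v'.1|)^2 = 4*(v.1 - v'.1)^2 := by
        rw [mul_pow, sq_abs]; norm_num
      nlinarith only [h1, h2, sq_nonneg (v.1 - v'.1)]
    calc eudist v v' = Real.sqrt ((v.1 - v'.1)^2 + (v.2 - v'.2)^2) := rfl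
      _ ≤ Real.sqrt ((2*|v.1 - v'.1|)^2) := Real.sqrt_le_sqrt hsqle
      _ = 2*|v.1 - v'.1| := Real.sqrt_sq (by positivity)

end Stmt2
namespace Stmt2

lemma floor_diff_le (x y : ℝ) (M : ℤ) (h : |x - y| + 1 ≤ (M:ℝ)) :
    -M ≤ ⌊x⌋ - ⌊y⌋ ∧ ⌊x⌋ - ⌊y⌋ ≤ M := by
  have h1 := Int.floor_le x
  have h2 := Int.sub_one_lt_floor x
  have h3 := Int.floor_le y
  have h4 := Int.sub_one_lt_floor y
  have h5 := le_abs_self (x - y)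
  have h6 := neg_abs_le (x - y)
  constructor
  · have : -(M:ℝ) ≤ (⌊x⌋:ℝ) - (⌊y⌋:ℝ) := by linarith
    exact_mod_cast this
  · have : (⌊x⌋:ℝ) - (⌊y⌋:ℝ) ≤ (M:ℝ) := by linarith
    exact_mod_cast this

lemma floor_apart (x y : ℝ) (h : 1 ≤ |x - y|) : ⌊x⌋ ≠ ⌊y⌋ := by
  intro he
  have h1 := Int.floor_le x
  have h2 := Int.lt_floor_add_one x
  have h3 := Int.floor_le y
  have h4 := Int.lt_floor_add_one y
  rw [he] at h1 h2
  rcases abs_cases (x - y) with ⟨e, _⟩ | ⟨e, _⟩ <;> rw [e] at h <;> linarith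

end Stmt2

open Stmt2

/-- the total number of bad lines is at most `10^{10d} c₁(K_L⁻¹)⁻¹`. -/
theorem statement2 (d : ℕ) (hd : 3 ≤ d) :
    ∃ ε₀' > (0 : ℝ), ∀ ε₀ : ℝ, 0 < ε₀ → ε₀ ≤ ε₀' →
      ∃ K₀ : ℝ, ∀ KL : ℝ, K₀ ≤ KL →
        ∀ a : ℕ → ℕ → ℝ, CoeffSmall d ε₀ a →
          ∀ D : Set (ℝ × ℝ), MaxSepSet (c1 d ε₀ KL) D →
            {q : ℝ × (ℝ × ℝ) | IsBadParam d (hpoly d a) ε₀ KL D q.1 q.2}.Finite ∧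
            (({q : ℝ × (ℝ × ℝ) |
                IsBadParam d (hpoly d a) ε₀ KL D q.1 q.2}.ncard : ℝ) ≤
              10 ^ (10 * d) / c1 d ε₀ KL) := by
  classical
  refine ⟨1/1000, by norm_num, ?_⟩
  intro ε hε0 hε1
  refine ⟨1, ?_⟩
  intro KL hKL a hsm D hD
  have hKL0 : (0:ℝ) < KL := lt_of_lt_of_le one_pos hKL
  set c₁ := c1 d ε KL with hc1def
  have hc10 : 0 < c₁ := by rw [hc1def, c1]; positivity
  set δ := ε/(10^(5*d)*KL) with hδdef
  have hδ0 : 0 < δ := by rw [hδdef]; positivity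
  have hδc : δ = 10^(5*d) * c₁ := by
    rw [hδdef, hc1def, c1,
      show (10:ℝ)^(10*d) = 10^(5*d) * 10^(5*d) from by rw [← pow_add]; congr 1; omega]
    field_simp
  set S := {q : ℝ × (ℝ × ℝ) | IsBadParam d (hpoly d a) ε KL D q.1 q.2} with hSdef
  -- pairwise estimate
  have hpair : ∀ t v w, (t, v) ∈ S → (t, w) ∈ S → cls v = cls w →
      |keyf v - keyf w| ≤ 8*(((d:ℝ)+1) * δ) ∧ eudist v w ≤ 2*|keyf v - keyf w| := by
    intro t v w hv hw hclw
    have hv' : IsBadParam d (hpoly d a) ε KL D t v := hv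
    have hw' : IsBadParam d (hpoly d a) ε KL D t w := hw
    obtain ⟨-, ht10, hvD, hbad⟩ := hv'
    obtain ⟨-, -, hwD, hbad'⟩ := hw'
    exact pair_bound d hd ε KL hε0 hε1 hKL a hsm t ht10 v w
      (hD.1 v hvD) (hD.1 w hwD) hbad hbad' hclw
  -- representative choice
  have hrho : ∃ ρ : ℤ → Fin 4 → ℝ × ℝ, ∀ (m : ℤ) (cl : Fin 4),
      (∃ w, ((m:ℝ)*c₁, w) ∈ S ∧ cls w = cl) →
      (((m:ℝ)*c₁, ρ m cl) ∈ S ∧ cls (ρ m cl) = cl) := by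
    refine ⟨fun m cl => if h : ∃ w, ((m:ℝ)*c₁, w) ∈ S ∧ cls w = cl
      then h.choose else ((1:ℝ), (0:ℝ)), ?_⟩
    intro m cl h
    simp only [dif_pos h]
    exact h.choose_spec
  obtain ⟨ρ, hρ⟩ := hrho
  -- the injection
  set M₁ : ℤ := ⌈10/c₁⌉ with hM₁def
  set M₃ : ℤ := 16*((d:ℤ)+1)*10^(5*d) + 2 with hM₃def
  set f : ℝ × (ℝ × ℝ) → ℤ × Fin 4 × ℤ := fun q =>
    (⌊q.1/c₁⌋, cls q.2, ⌊2*keyf q.2/c₁⌋ - ⌊2*keyf (ρ ⌊q.1/c₁⌋ (cls q.2))/c₁⌋) with hfdef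
  set T : Finset (ℤ × Fin 4 × ℤ) :=
    Finset.Icc (-M₁) M₁ ×ˢ (Finset.univ : Finset (Fin 4)) ×ˢ Finset.Icc (-M₃) M₃ with hTdef
  -- basic member facts
  have hfl : ∀ t (v : ℝ × ℝ), (t, v) ∈ S → t = (⌊t/c₁⌋ : ℝ) * c₁ := by
    intro t v hq
    have hq' : IsBadParam d (hpoly d a) ε KL D t v := hq
    obtain ⟨⟨m, hm⟩, -, -, -⟩ := hq'
    have hm' : ⌊t/c₁⌋ = m := by
      rw [hm, mul_div_cancel_right₀ _ hc10.ne', Int.floor_intCast]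
    rw [hm']
    exact hm
  have hkey16 : ∀ t (v : ℝ × ℝ), (t, v) ∈ S →
      |2*keyf v/c₁ - 2*keyf (ρ ⌊t/c₁⌋ (cls v))/c₁| ≤ 16*((d:ℝ)+1)*10^(5*d) := by
    intro t v hq
    have ht' := hfl t v hq
    have hex : ∃ w, ((⌊t/c₁⌋:ℝ)*c₁, w) ∈ S ∧ cls w = cls v := ⟨v, by rw [← ht']; exact hq, rfl⟩
    have hρs := hρ ⌊t/c₁⌋ (cls v) hex
    have hw : (t, ρ ⌊t/c₁⌋ (cls v)) ∈ S := by
      have hw0 := hρs.1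
      rw [← ht'] at hw0
      exact hw0
    have hp := hpair t v (ρ ⌊t/c₁⌋ (cls v)) hq hw hρs.2.symm
    have e : 2*keyf v/c₁ - 2*keyf (ρ ⌊t/c₁⌋ (cls v))/c₁
        = 2*(keyf v - keyf (ρ ⌊t/c₁⌋ (cls v)))/c₁ := by ring
    rw [e, abs_div, abs_of_pos hc10, abs_mul, abs_two]
    rw [div_le_iff₀ hc10]
    calc 2 * |keyf v - keyf (ρ ⌊t/c₁⌋ (cls v))| ≤ 2 * (8*(((d:ℝ)+1) * δ)) := by
          linarith [hp.1]
      _ = 16*((d:ℝ)+1)*10^(5*d)*c₁ := by rw [hδc]; ring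
  have hsep1 : ∀ t v w, (t, v) ∈ S → (t, w) ∈ S → cls v = cls w → v ≠ w →
      1 ≤ |2*keyf v/c₁ - 2*keyf w/c₁| := by
    intro t v w hv hw hcl hne
    have hv' : IsBadParam d (hpoly d a) ε KL D t v := hv
    have hw' : IsBadParam d (hpoly d a) ε KL D t w := hw
    have hsep := hD.2.1 v hv'.2.2.1 w hw'.2.2.1 hne
    have hp := hpair t v w hv hw hcl
    have e : 2*keyf v/c₁ - 2*keyf w/c₁ = 2*(keyf v - keyf w)/c₁ := by ring
    rw [e, abs_div, abs_of_pos hc10, abs_mul, abs_two, le_div_iff₀ hc10]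
    have : c₁ ≤ 2*|keyf v - keyf w| := le_trans hsep hp.2
    linarith
  -- maps to T
  have hmapsto : ∀ q ∈ S, f q ∈ (T : Set (ℤ × Fin 4 × ℤ)) := by
    rintro ⟨t, v⟩ hq
    have hq' : IsBadParam d (hpoly d a) ε KL D t v := hq
    obtain ⟨⟨m, hm⟩, ht10, hvD, -⟩ := hq'
    have hm' : ⌊t/c₁⌋ = m := by
      rw [hm, mul_div_cancel_right₀ _ hc10.ne', Int.floor_intCast]
    refine Finset.mem_coe.mpr (Finset.mem_product.mpr ⟨?_, Finset.mem_product.mpr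
      ⟨Finset.mem_univ _, ?_⟩⟩)
    · -- |m| ≤ M₁
      have hmb : |(m:ℝ)| * c₁ ≤ 10 := by
        rw [← abs_of_pos hc10, ← abs_mul, ← hm]
        exact ht10
      have hmle : (|m|:ℝ) ≤ 10/c₁ := by
        rw [le_div_iff₀ hc10]
        push_cast
        exact hmb
      have hcast : (|m|:ℝ) ≤ (M₁:ℝ) := le_trans hmle (Int.le_ceil _)
      have habs : |m| ≤ M₁ := by exact_mod_cast hcast
      simp only [hfdef, Finset.mem_Icc]
      rw [hm']
      exact ⟨(abs_le.mp habs).1, (abs_le.mp habs).2⟩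
    · -- third coordinate
      have h16 := hkey16 t v hq
      have hMb : |2*keyf v/c₁ - 2*keyf (ρ ⌊t/c₁⌋ (cls v))/c₁| + 1 ≤ (M₃:ℝ) := by
        rw [hM₃def]
        push_cast
        linarith
      have hfd := floor_diff_le _ _ M₃ hMb
      simp only [hfdef, Finset.mem_Icc]
      exact ⟨hfd.1, hfd.2⟩
  -- injectivity
  have hinj : Set.InjOn f S := by
    rintro ⟨t, v⟩ hq ⟨t', v'⟩ hq' heq
    simp only [hfdef, Prod.mk.injEq] at heq
    obtain ⟨h1, h2, h3⟩ := heq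
    have htt : t = t' := by
      rw [hfl t v hq, hfl t' v' hq', h1]
    have hveq : v = v' := by
      by_contra hne
      have hq'' : (t, v') ∈ S := by rw [htt]; exact hq'
      have hflr : ⌊2*keyf v/c₁⌋ = ⌊2*keyf v'/c₁⌋ := by
        rw [h1, h2] at h3
        omega
      exact floor_apart _ _ (hsep1 t v v' hq hq'' h2 hne) hflr
    rw [htt, hveq]
  -- finiteness
  have himg : f '' S ⊆ (T : Set (ℤ × Fin 4 × ℤ)) := by
    rintro x ⟨q, hq, rfl⟩
    exact hmapsto q hq
  have hfin : S.Finite := Set.Finite.of_finite_image (T.finite_toSet.subset himg) hinj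
  refine ⟨hfin, ?_⟩
  -- cardinality
  have hcard : S.ncard ≤ T.card := by
    have := Set.ncard_le_ncard_of_injOn f hmapsto hinj T.finite_toSet
    rwa [Set.ncard_coe_finset] at this
  have hM₁0 : (0:ℤ) ≤ M₁ := Int.ceil_nonneg (by positivity)
  have hM₃0 : (0:ℤ) ≤ M₃ := by positivity
  have hTval : (T.card : ℝ) = (2*(M₁:ℝ)+1) * (4 * (2*(M₃:ℝ)+1)) := by
    rw [hTdef, Finset.card_product, Finset.card_product, Int.card_Icc, Int.card_Icc,
      Finset.card_univ, Fintype.card_fin,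
      show M₁+1-(-M₁) = 2*M₁+1 from by ring, show M₃+1-(-M₃) = 2*M₃+1 from by ring]
    have c1' : (((2*M₁+1).toNat : ℕ) : ℝ) = 2*(M₁:ℝ)+1 := by
      exact_mod_cast Int.toNat_of_nonneg (by omega : (0:ℤ) ≤ 2*M₁+1)
    have c3' : (((2*M₃+1).toNat : ℕ) : ℝ) = 2*(M₃:ℝ)+1 := by
      exact_mod_cast Int.toNat_of_nonneg (by omega : (0:ℤ) ≤ 2*M₃+1)
    push_cast
    rw [c1', c3']
  -- final numeric bound
  have hM1b : (M₁:ℝ) ≤ 10/c₁ + 1 := le_of_lt (Int.ceil_lt_add_one _)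
  have hM3b : (M₃:ℝ) = 16*((d:ℝ)+1)*10^(5*d) + 2 := by rw [hM₃def]; push_cast; ring
  set P : ℝ := 10^(5*d) with hPdef
  have hP1 : (1:ℝ) ≤ P := one_le_pow₀ (by norm_num)
  have hP0 : (0:ℝ) < P := lt_of_lt_of_le one_pos hP1
  have hc₁1 : c₁ ≤ 1 := by
    rw [hc1def, c1]
    have h1 : (1:ℝ) ≤ 10^(10*d)*KL := by
      have := one_le_pow₀ (show (1:ℝ) ≤ 10 from by norm_num) (n := 10*d)
      nlinarith only [this, hKL]
    rw [div_le_one (by positivity)]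
    linarith [hε1, h1]
  have h3404 : 3404*((d:ℝ)+1) ≤ P := by
    have e1 : ((d:ℝ)+1) ≤ 10^d := num2 d
    have e2 : P = 10^(4*d)*10^d := by rw [hPdef, ← pow_add]; congr 1; omega
    have e3 : (10000:ℝ) ≤ 10^(4*d) := by
      calc (10000:ℝ) = 10^4 := by norm_num
        _ ≤ 10^(4*d) := pow_le_pow_right₀ (by norm_num) (by omega)
    have e4 : (0:ℝ) < 10^d := by positivity
    have e5 : (0:ℝ) ≤ 10^(4*d) := by positivity
    have e6 := mul_le_mul e3 e1 (by positivity) e5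
    rw [e2]
    nlinarith only [e6, e4]
  have h10P : (10:ℝ)^(10*d) = P*P := by
    rw [hPdef, ← pow_add]; congr 1; omega
  rw [h10P]
  have hstep : (T.card : ℝ) ≤ (2*(10/c₁+1)+1) * (4*(2*(16*((d:ℝ)+1)*P+2)+1)) := by
    have hb1 : 2*(M₁:ℝ)+1 ≤ 2*(10/c₁+1)+1 := by linarith
    have hpos2 : (0:ℝ) ≤ 4 * (2*(M₃:ℝ)+1) := by
      have : (0:ℝ) ≤ (M₃:ℝ) := by exact_mod_cast hM₃0
      linarith
    have hmm := mul_le_mul_of_nonneg_right hb1 hpos2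
    rw [hTval]
    calc (2*(M₁:ℝ)+1) * (4 * (2*(M₃:ℝ)+1))
        ≤ (2*(10/c₁+1)+1) * (4 * (2*(M₃:ℝ)+1)) := hmm
      _ = (2*(10/c₁+1)+1) * (4*(2*(16*((d:ℝ)+1)*P+2)+1)) := by rw [hM3b]
  have hY : (4*(2*(16*((d:ℝ)+1)*P+2)+1)) ≤ 148*((d:ℝ)+1)*P := by
    have hdP : (1:ℝ) ≤ ((d:ℝ)+1)*P := by
      have hd0 : (1:ℝ) ≤ (d:ℝ)+1 := by
        have := Nat.cast_nonneg (α := ℝ) d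
        linarith
      nlinarith only [hd0, hP1]
    nlinarith only [hdP]
  have hfinal : (2*(10/c₁+1)+1) * (4*(2*(16*((d:ℝ)+1)*P+2)+1)) ≤ P*P/c₁ := by
    rw [le_div_iff₀ hc10]
    have hYpos : (0:ℝ) ≤ 4*(2*(16*((d:ℝ)+1)*P+2)+1) := by positivity
    have e : (2*(10/c₁+1)+1) * (4*(2*(16*((d:ℝ)+1)*P+2)+1)) * c₁
        = (20 + 3*c₁) * (4*(2*(16*((d:ℝ)+1)*P+2)+1)) := by
      field_simp
      ring
    rw [e]
    have h23 : 20 + 3*c₁ ≤ 23 := by linarith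
    have hc0 : (0:ℝ) ≤ 20 + 3*c₁ := by linarith [hc10.le]
    calc (20 + 3*c₁) * (4*(2*(16*((d:ℝ)+1)*P+2)+1))
        ≤ 23 * (148*((d:ℝ)+1)*P) := by
          have := mul_le_mul h23 hY hYpos (by norm_num)
          linarith
      _ = 3404*((d:ℝ)+1)*P := by ring
      _ ≤ P*P := by
          have := mul_le_mul_of_nonneg_right h3404 hP0.le
          linarith
  calc (S.ncard : ℝ) ≤ (T.card : ℝ) := by exact_mod_cast hcard
    _ ≤ _ := hstep
    _ ≤ P*P/c₁ := hfinal
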